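/- Let Y be a real topological vector space, A ⊆ Y and k ∈ Y \ {0}. Then cl_k(A) is a topologically closed set if and only if cl_k(A) = cl(A). -/

import Mathlib

/-- The `k`-directional closure of a set `A`. -/
def dirCl {Y : Type*} [AddCommGroup Y] [Module ℝ Y] (A : Set Y) (k : Y) : Set Y :=
  {y | ∀ l : ℝ, 0 < l → ∃ t : ℝ, 0 ≤ t ∧ t < l ∧ y - t • k ∈ A}

lemma subset_dirCl {Y : Type*} [AddCommGroup Y] [Module ℝ Y] (A : Set Y) (k : Y) :
    A ⊆ dirCl A k := by
  intro y hy l hl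
  exact ⟨0, le_refl 0, hl, by simpa using hy⟩

lemma dirCl_subset_closure {Y : Type*} [AddCommGroup Y] [Module ℝ Y] [TopologicalSpace Y]
    [IsTopologicalAddGroup Y] [ContinuousSMul ℝ Y] (A : Set Y) (k : Y) :
    dirCl A k ⊆ closure A := by
  intro y hy
  rw [mem_closure_iff_nhds]
  intro U hU
  have hcont : Continuous (fun t : ℝ => y - t • k) := by continuity
  have h0 : (fun t : ℝ => y - t • k) ⁻¹' U ∈ nhds (0 : ℝ) := by
    apply hcont.continuousAt.preimage_mem_nhds
    simpa using hU
  obtain ⟨ε, hε, hball⟩ := Metric.mem_nhds_iff.mp h0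
  obtain ⟨t, ht0, htε, htA⟩ := hy ε hε
  refine ⟨y - t • k, ?_, htA⟩
  apply hball
  simp [Metric.mem_ball, Real.dist_eq, abs_of_nonneg ht0, htε]

theorem isClosed_dirCl_iff {Y : Type*} [AddCommGroup Y] [Module ℝ Y] [TopologicalSpace Y]
    [IsTopologicalAddGroup Y] [ContinuousSMul ℝ Y] (A : Set Y) (k : Y) (hk : k ≠ 0) :
    IsClosed (dirCl A k) ↔ dirCl A k = closure A := by
  constructor
  · intro hc
    apply Set.Subset.antisymm (dirCl_subset_closure A k)
    calc closure A ⊆ closure (dirCl A k) := closure_mono (subset_dirCl A k)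
      _ = dirCl A k := hc.closure_eq
  · intro h
    rw [h]
    exact isClosed_closure
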